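/- arXiv:2109.13965 — 2 statements merged into one kernel-verified Lean document; each statement's English description precedes it below -/
import Mathlib

section
/- Let G be a group with right Følner sequence (F_k) acting by *-automorphisms Ξ on a unital C*-algebra M, let x ∈ M be positive, and let (σ_k) be states on M with σ_k((1/|F_k|) ∑_{g∈F_k} Ξ_g x) = ‖(1/|F_k|) ∑_{g∈F_k} Ξ_g x‖ for each k. Fix an infinite hypernatural K and define ω(y) = st(*(k ↦ σ_k((1/|F_k|) ∑_{g∈F_k} Ξ_g y))(K)). Then ω is a Ξ-invariant state on M, i.e., ω ∘ Ξ_{g₀} = ω for all g₀ ∈ G. -/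
open Filter

/-- A state on a unital C*-algebra: a linear, unital, positive functional. -/
def IsState {A : Type*} [NormedRing A] [StarRing A] [NormedAlgebra ℂ A]
    (φ : A → ℂ) : Prop :=
  (∀ x y : A, φ (x + y) = φ x + φ y) ∧
  (∀ (c : ℂ) (x : A), φ (c • x) = c * φ x) ∧
  φ 1 = 1 ∧
  ∀ a : A, 0 ≤ (φ (star a * a)).re ∧ (φ (star a * a)).im = 0

/-- The hypernatural numbers. -/
def Hypernat : Type := Germ (hyperfilter ℕ : Filter ℕ) ℕ

/-- A hypernatural is unlimited if it is not a standard natural number. -/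
def Hypernat.Unlimited (K : Hypernat) : Prop :=
  ∀ n : ℕ, K ≠ (Filter.Germ.const n : Germ (hyperfilter ℕ : Filter ℕ) ℕ)

/-- The value `*f(K)` of the nonstandard extension of `f : ℕ → α` at `K`. -/
noncomputable def Hypernat.extEval {α : Type*} (f : ℕ → α) (K : Hypernat) :
    Germ (hyperfilter ℕ : Filter ℕ) α :=
  Filter.Germ.map f K

/-- `st(z) = L` for a hypercomplex number `z`. -/
def IsStC (z : Germ (hyperfilter ℕ : Filter ℕ) ℂ) (L : ℂ) : Prop :=
  Hyperreal.IsSt (z.map Complex.re) L.re ∧ Hyperreal.IsSt (z.map Complex.im) L.im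

section helpers

variable {A : Type*} [NormedRing A] [StarRing A] [NormedAlgebra ℂ A]

theorem IsState.map_zero' {φ : A → ℂ} (h : IsState φ) : φ 0 = 0 := by
  simpa using h.2.1 0 0

theorem IsState.map_sub' {φ : A → ℂ} (h : IsState φ) (x y : A) :
    φ (x - y) = φ x - φ y := by
  have hneg : φ (-y) = -φ y := by simpa using h.2.1 (-1) y
  rw [sub_eq_add_neg, h.1, hneg, sub_eq_add_neg]

theorem IsState.map_sum' {φ : A → ℂ} (h : IsState φ) {ι : Type*} (s : Finset ι)
    (v : ι → A) : φ (∑ i ∈ s, v i) = ∑ i ∈ s, φ (v i) := by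
  classical
  induction s using Finset.induction_on with
  | empty => simpa using h.map_zero'
  | insert i s hi ih => rw [Finset.sum_insert hi, Finset.sum_insert hi, h.1, ih]

end helpers

theorem IsState.abs_le' {A : Type*} [NormedRing A] [StarRing A] [CStarRing A]
    [NormedAlgebra ℂ A] [StarModule ℂ A] [CompleteSpace A]
    {φ : A → ℂ} (h : IsState φ) (a : A) : ‖φ a‖ ≤ ‖a‖ := by
  obtain ⟨hadd, hsmul, hone, hpos⟩ := h
  have h' : IsState φ := ⟨hadd, hsmul, hone, hpos⟩
  letI : CStarAlgebra A := {}
  letI := CStarAlgebra.spectralOrder A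
  haveI := CStarAlgebra.spectralOrderedRing A
  -- positivity on nonneg elements
  have hnn : ∀ d : A, 0 ≤ d → 0 ≤ (φ d).re ∧ (φ d).im = 0 := by
    intro d hd
    rw [StarOrderedRing.nonneg_iff] at hd
    induction hd using AddSubmonoid.closure_induction with
    | mem x hx =>
      obtain ⟨s, rfl⟩ := hx
      exact hpos s
    | zero => simp [h'.map_zero']
    | add x y _ _ hx hy =>
      rw [hadd]
      constructor
      · simpa using add_nonneg hx.1 hy.1
      · simp [hx.2, hy.2]
  -- real and bounded on selfadjoints
  have hreal : ∀ b : A, IsSelfAdjoint b → (φ b).im = 0 ∧ (φ b).re ≤ ‖b‖ := by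
    intro b hb
    have hd : (0:A) ≤ algebraMap ℝ A ‖b‖ - b := sub_nonneg.mpr hb.le_algebraMap_norm_self
    obtain ⟨hre, him⟩ := hnn _ hd
    have halg : φ (algebraMap ℝ A ‖b‖) = (‖b‖ : ℂ) := by
      have h1 : algebraMap ℝ A ‖b‖ = (‖b‖ : ℂ) • (1:A) := by
        rw [Algebra.algebraMap_eq_smul_one, ← algebraMap_smul ℂ (‖b‖) (1:A),
          Complex.coe_algebraMap]
      rw [h1, hsmul, hone, mul_one]
    rw [h'.map_sub', halg] at hre him
    constructor
    · simpa using him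
    · simpa using hre
  -- φ is star-preserving
  have hstar : ∀ b : A, φ (star b) = starRingEnd ℂ (φ b) := by
    have main : ∀ p q : A, IsSelfAdjoint p → IsSelfAdjoint q →
        φ (star (p + Complex.I • q)) = starRingEnd ℂ (φ (p + Complex.I • q)) := by
      intro p q hp hq
      have hst : star (p + Complex.I • q) = p - Complex.I • q := by
        rw [star_add, star_smul, hp.star_eq, hq.star_eq, Complex.star_def, Complex.conj_I]
        module
      rw [hst, h'.map_sub', hadd, hsmul]
      have h1 := (hreal p hp).1
      have h2 := (hreal q hq).1
      apply Complex.ext <;> simp [h1, h2]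
    intro b
    have hp : IsSelfAdjoint ((2:ℂ)⁻¹ • (b + star b)) := by
      rw [IsSelfAdjoint, star_smul, star_add, star_star]
      simp only [Complex.star_def, map_inv₀, Complex.conj_ofNat]
      module
    have hq : IsSelfAdjoint ((2:ℂ)⁻¹ • (Complex.I • (star b - b))) := by
      rw [IsSelfAdjoint, star_smul, star_smul, star_sub, star_star]
      simp only [Complex.star_def, map_inv₀, Complex.conj_ofNat, Complex.conj_I]
      module
    have hdec : b = (2:ℂ)⁻¹ • (b + star b)
        + Complex.I • ((2:ℂ)⁻¹ • (Complex.I • (star b - b))) := by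
      rw [smul_smul, smul_smul]
      have hc : Complex.I * (2:ℂ)⁻¹ * Complex.I = -(2:ℂ)⁻¹ := by
        rw [show Complex.I * (2:ℂ)⁻¹ * Complex.I = Complex.I * Complex.I * (2:ℂ)⁻¹ from by ring,
          Complex.I_mul_I]
        ring
      rw [hc]; module
    conv_lhs => rw [hdec]
    conv_rhs => rw [hdec]
    exact main _ _ hp hq
  -- Cauchy-Schwarz with 1
  have key : Complex.normSq (φ a) ≤ (φ (star a * a)).re := by
    have hexp : star (a - φ a • 1) * (a - φ a • 1)
        = star a * a - φ a • star a - (starRingEnd ℂ (φ a)) • a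
          + ((starRingEnd ℂ (φ a)) * φ a) • (1:A) := by
      simp only [star_sub, star_smul, star_one, sub_mul, mul_sub, smul_mul_assoc,
        mul_smul_comm, mul_one, one_mul, smul_smul, smul_sub, smul_add, Complex.star_def]
      module
    have hφ : φ (star (a - φ a • 1) * (a - φ a • 1))
        = φ (star a * a) - Complex.normSq (φ a) := by
      rw [hexp, hadd, h'.map_sub', h'.map_sub', hsmul, hsmul, hsmul, hone, mul_one, hstar]
      linear_combination (-(1:ℂ)) * Complex.mul_conj (φ a)
    have hge := (hpos (a - φ a • 1)).1
    rw [hφ] at hge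
    simpa using hge
  have h2 : (φ (star a * a)).re ≤ ‖star a * a‖ := (hreal _ (IsSelfAdjoint.star_mul_self a)).2
  have h3 : ‖star a * a‖ = ‖a‖ * ‖a‖ := CStarRing.norm_star_mul_self
  have h4 : ‖φ a‖ ^ 2 ≤ ‖a‖ ^ 2 := by
    rw [Complex.sq_norm]
    nlinarith
  exact (pow_le_pow_iff_left₀ (norm_nonneg _) (norm_nonneg _) (by norm_num)).mp h4

/-- The ultralimit along an unlimited hypernatural of norming states of the
Følner averages of a positive element is an invariant state. -/
theorem invariant_state_from_ultralimit
    {G : Type*} [Group G] [DecidableEq G] {M : Type*}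
    [NormedRing M] [StarRing M] [CStarRing M] [NormedAlgebra ℂ M] [StarModule ℂ M]
    [CompleteSpace M]
    (F : ℕ → Finset G) (hne : ∀ k, (F k).Nonempty)
    (hFolner : ∀ g : G,
      Tendsto (fun k => ((symmDiff (F k) ((F k).image (· * g))).card : ℝ) / (F k).card)
        atTop (nhds 0))
    (Ξ : G → M ≃⋆ₐ[ℂ] M) (hΞ : ∀ g h : G, ∀ y : M, Ξ (g * h) y = Ξ g (Ξ h y))
    (x : M) (hx : ∃ b : M, x = star b * b)
    (σ : ℕ → M → ℂ) (hσ : ∀ k, IsState (σ k))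
    (hnorming : ∀ k,
      σ k (((F k).card : ℂ)⁻¹ • ∑ g ∈ F k, Ξ g x)
        = (‖((F k).card : ℂ)⁻¹ • ∑ g ∈ F k, Ξ g x‖ : ℂ))
    (K : Hypernat) (hK : K.Unlimited)
    (ω : M → ℂ)
    (hω : ∀ y : M,
      IsStC (Hypernat.extEval
        (fun k => σ k (((F k).card : ℂ)⁻¹ • ∑ g ∈ F k, Ξ g y)) K) (ω y)) :
    IsState ω ∧ ∀ (g₀ : G) (y : M), ω (Ξ g₀ y) = ω y := by
  classical
  obtain ⟨u, hu⟩ := Quotient.exists_rep K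
  have hu' : (↑u : Filter.Germ (hyperfilter ℕ : Filter ℕ) ℕ) = K := hu
  -- `u` tends to infinity along the hyperfilter
  have hu_top : Tendsto u (hyperfilter ℕ : Filter ℕ) atTop := by
    rw [tendsto_atTop]
    intro b
    have h1 : ∀ m : ℕ, ∀ᶠ i in (hyperfilter ℕ : Filter ℕ), u i ≠ m := by
      intro m
      have h2 : ¬ (∀ᶠ i in (hyperfilter ℕ : Filter ℕ), u i = m) := by
        intro h3
        exact hK m (hu' ▸
          (Filter.Germ.coe_eq.mpr h3 :
            (↑u : Filter.Germ (hyperfilter ℕ : Filter ℕ) ℕ) = Filter.Germ.const m))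
      exact Ultrafilter.eventually_not.mpr h2
    have h4 : ∀ᶠ i in (hyperfilter ℕ : Filter ℕ), ∀ m ∈ Finset.range b, u i ≠ m :=
      (eventually_all_finset _).mpr fun m _ => h1 m
    filter_upwards [h4] with i hi
    by_contra hbi
    exact hi (u i) (Finset.mem_range.mpr (Nat.lt_of_not_le hbi)) rfl
  set l : Filter ℕ := Filter.map u (hyperfilter ℕ : Filter ℕ) with hl_def
  haveI : l.NeBot := by rw [hl_def]; exact Filter.map_neBot
  have hl : l ≤ atTop := hu_top
  -- the ultralimit is a limit along `l`
  have hω' : ∀ y : M,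
      Tendsto (fun k => σ k (((F k).card : ℂ)⁻¹ • ∑ g ∈ F k, Ξ g y)) l (nhds (ω y)) := by
    intro y
    obtain ⟨hre, him⟩ := hω y
    rw [← hu'] at hre him
    unfold Hypernat.extEval at hre him
    rw [Filter.Germ.map_coe, Filter.Germ.map_coe] at hre him
    have hre' := Hyperreal.isSt_ofSeq_iff_tendsto.mp hre
    have him' := Hyperreal.isSt_ofSeq_iff_tendsto.mp him
    rw [hl_def, tendsto_map'_iff]
    have h5 := ((Complex.continuous_ofReal.tendsto _).comp hre').add
      (((Complex.continuous_ofReal.tendsto _).comp him').mul_const Complex.I)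
    simpa only [Function.comp_def, Complex.re_add_im] using h5
  -- pointwise algebraic identities
  have hσadd : ∀ k (y z : M),
      σ k (((F k).card : ℂ)⁻¹ • ∑ g ∈ F k, Ξ g (y + z))
        = σ k (((F k).card : ℂ)⁻¹ • ∑ g ∈ F k, Ξ g y)
          + σ k (((F k).card : ℂ)⁻¹ • ∑ g ∈ F k, Ξ g z) := by
    intro k y z
    simp only [map_add, Finset.sum_add_distrib, smul_add, (hσ k).1]
  have hσsmul : ∀ k (c : ℂ) (y : M),
      σ k (((F k).card : ℂ)⁻¹ • ∑ g ∈ F k, Ξ g (c • y))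
        = c * σ k (((F k).card : ℂ)⁻¹ • ∑ g ∈ F k, Ξ g y) := by
    intro k c y
    have h6 : (∑ g ∈ F k, Ξ g (c • y)) = c • ∑ g ∈ F k, Ξ g y := by
      rw [Finset.smul_sum]
      exact Finset.sum_congr rfl fun g _ => map_smul (Ξ g) c y
    rw [h6, smul_comm, (hσ k).2.1]
  have hσone : ∀ k,
      σ k (((F k).card : ℂ)⁻¹ • ∑ g ∈ F k, Ξ g (1 : M)) = 1 := by
    intro k
    have hcard : ((F k).card : ℂ) ≠ 0 :=
      Nat.cast_ne_zero.mpr (Finset.card_pos.mpr (hne k)).ne'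
    have h6 : (∑ g ∈ F k, Ξ g (1 : M)) = ((F k).card : ℂ) • (1 : M) := by
      simp only [map_one, Finset.sum_const]
      rw [Nat.cast_smul_eq_nsmul]
    rw [h6, smul_smul, inv_mul_cancel₀ hcard, one_smul, (hσ k).2.2.1]
  have hσpos : ∀ k (a : M),
      0 ≤ (σ k (((F k).card : ℂ)⁻¹ • ∑ g ∈ F k, Ξ g (star a * a))).re
        ∧ (σ k (((F k).card : ℂ)⁻¹ • ∑ g ∈ F k, Ξ g (star a * a))).im = 0 := by
    intro k a
    have h1 : (∑ g ∈ F k, Ξ g (star a * a)) = ∑ g ∈ F k, star (Ξ g a) * (Ξ g a) :=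
      Finset.sum_congr rfl fun g _ => by rw [map_mul, map_star]
    have h2 : σ k (((F k).card : ℂ)⁻¹ • ∑ g ∈ F k, Ξ g (star a * a))
        = ((F k).card : ℂ)⁻¹ * ∑ g ∈ F k, σ k (star (Ξ g a) * (Ξ g a)) := by
      rw [h1, (hσ k).2.1, (hσ k).map_sum']
    have h3 : (((F k).card : ℂ))⁻¹ = Complex.ofReal (((F k).card : ℝ)⁻¹) := by
      rw [Complex.ofReal_inv, Complex.ofReal_natCast]
    have hsumre : 0 ≤ (∑ g ∈ F k, σ k (star (Ξ g a) * (Ξ g a))).re := by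
      rw [Complex.re_sum]
      exact Finset.sum_nonneg fun g _ => ((hσ k).2.2.2 (Ξ g a)).1
    have hsumim : (∑ g ∈ F k, σ k (star (Ξ g a) * (Ξ g a))).im = 0 := by
      rw [Complex.im_sum]
      exact Finset.sum_eq_zero fun g _ => ((hσ k).2.2.2 (Ξ g a)).2
    constructor
    · rw [h2, h3]
      simp only [Complex.mul_re, Complex.ofReal_re, Complex.ofReal_im, zero_mul, sub_zero]
      exact mul_nonneg (by positivity) hsumre
    · rw [h2, h3]
      simp [Complex.mul_im, hsumim]
  refine ⟨⟨?_, ?_, ?_, ?_⟩, ?_⟩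
  · -- additivity
    intro y z
    refine tendsto_nhds_unique (hω' (y + z)) ?_
    have h7 := (hω' y).add (hω' z)
    simpa only [← hσadd] using h7
  · -- homogeneity
    intro c y
    refine tendsto_nhds_unique (hω' (c • y)) ?_
    have h7 := (hω' y).const_mul c
    simpa only [← hσsmul] using h7
  · -- unital
    refine tendsto_nhds_unique (hω' 1) ?_
    have h7 : (fun k => σ k (((F k).card : ℂ)⁻¹ • ∑ g ∈ F k, Ξ g (1 : M)))
        = fun _ => (1 : ℂ) := funext hσone
    rw [h7]
    exact tendsto_const_nhds
  · -- positivity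
    intro a
    constructor
    · exact ge_of_tendsto ((Complex.continuous_re.tendsto _).comp (hω' (star a * a)))
        (Eventually.of_forall fun k => (hσpos k a).1)
    · have h6 : (Complex.im ∘ fun k =>
          σ k (((F k).card : ℂ)⁻¹ • ∑ g ∈ F k, Ξ g (star a * a))) = fun _ => (0 : ℝ) :=
        funext fun k => (hσpos k a).2
      have h7 := (Complex.continuous_im.tendsto _).comp (hω' (star a * a))
      rw [h6] at h7
      exact tendsto_nhds_unique h7 tendsto_const_nhds
  · -- invariance
    intro g₀ y
    letI : CStarAlgebra M := {}
    have hbound : ∀ k,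
        ‖σ k (((F k).card : ℂ)⁻¹ • ∑ g ∈ F k, Ξ g (Ξ g₀ y))
            - σ k (((F k).card : ℂ)⁻¹ • ∑ g ∈ F k, Ξ g y)‖
          ≤ ((symmDiff (F k) ((F k).image (· * g₀))).card : ℝ) / (F k).card * ‖y‖ := by
      intro k
      set T := (F k).image (· * g₀) with hT
      have hinj : ∀ a ∈ F k, ∀ b ∈ F k, a * g₀ = b * g₀ → a = b :=
        fun a _ b _ h => mul_right_cancel h
      have hsum1 : (∑ g ∈ F k, Ξ g (Ξ g₀ y)) = ∑ h ∈ T, Ξ h y := by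
        rw [hT, Finset.sum_image hinj]
        exact Finset.sum_congr rfl fun g _ => (hΞ g g₀ y).symm
      have hdiff : σ k (((F k).card : ℂ)⁻¹ • ∑ g ∈ F k, Ξ g (Ξ g₀ y))
            - σ k (((F k).card : ℂ)⁻¹ • ∑ g ∈ F k, Ξ g y)
          = σ k (((F k).card : ℂ)⁻¹ • ((∑ h ∈ T, Ξ h y) - ∑ g ∈ F k, Ξ g y)) := by
        rw [smul_sub, (hσ k).map_sub', hsum1]
      rw [hdiff]
      refine le_trans ((hσ k).abs_le' _) ?_
      rw [norm_smul]
      have hT_split : (∑ h ∈ T, Ξ h y) - ∑ g ∈ F k, Ξ g y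
          = (∑ h ∈ T \ F k, Ξ h y) - ∑ g ∈ F k \ T, Ξ g y :=
        (Finset.sum_sdiff_sub_sum_sdiff).symm
      rw [hT_split]
      have e1 : ‖∑ h ∈ T \ F k, Ξ h y‖ ≤ ((T \ F k).card : ℝ) * ‖y‖ := by
        refine (norm_sum_le _ _).trans (le_of_eq ?_)
        calc (∑ h ∈ T \ F k, ‖Ξ h y‖) = ∑ _h ∈ T \ F k, ‖y‖ :=
              Finset.sum_congr rfl fun h _ => StarAlgEquiv.norm_map (Ξ h) y
          _ = ((T \ F k).card : ℝ) * ‖y‖ := by rw [Finset.sum_const, nsmul_eq_mul]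
      have e2 : ‖∑ g ∈ F k \ T, Ξ g y‖ ≤ ((F k \ T).card : ℝ) * ‖y‖ := by
        refine (norm_sum_le _ _).trans (le_of_eq ?_)
        calc (∑ g ∈ F k \ T, ‖Ξ g y‖) = ∑ _g ∈ F k \ T, ‖y‖ :=
              Finset.sum_congr rfl fun g _ => StarAlgEquiv.norm_map (Ξ g) y
          _ = ((F k \ T).card : ℝ) * ‖y‖ := by rw [Finset.sum_const, nsmul_eq_mul]
      have hnorm1 : ‖(∑ h ∈ T \ F k, Ξ h y) - ∑ g ∈ F k \ T, Ξ g y‖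
          ≤ (((T \ F k).card : ℝ) + ((F k \ T).card : ℝ)) * ‖y‖ := by
        refine (norm_sub_le _ _).trans ?_
        rw [add_mul]
        exact add_le_add e1 e2
      have hc : ‖(((F k).card : ℂ))⁻¹‖ = (((F k).card : ℝ))⁻¹ := by
        rw [norm_inv, Complex.norm_natCast]
      have hcard : ((symmDiff (F k) T).card : ℝ)
          = ((F k \ T).card : ℝ) + ((T \ F k).card : ℝ) := by
        rw [symmDiff_def, Finset.sup_eq_union,
          Finset.card_union_of_disjoint disjoint_sdiff_sdiff]
        push_cast
        ring
      rw [hc]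
      calc (((F k).card : ℝ))⁻¹ * ‖(∑ h ∈ T \ F k, Ξ h y) - ∑ g ∈ F k \ T, Ξ g y‖
          ≤ (((F k).card : ℝ))⁻¹ * ((((T \ F k).card : ℝ) + ((F k \ T).card : ℝ)) * ‖y‖) :=
            mul_le_mul_of_nonneg_left hnorm1 (by positivity)
        _ = ((symmDiff (F k) T).card : ℝ) / (F k).card * ‖y‖ := by
            rw [hcard, div_eq_inv_mul]
            ring
    have hb0 : Tendsto
        (fun k => ((symmDiff (F k) ((F k).image (· * g₀))).card : ℝ) / (F k).card * ‖y‖)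
        atTop (nhds 0) := by
      simpa using (hFolner g₀).mul_const ‖y‖
    have hzero : Tendsto
        (fun k => σ k (((F k).card : ℂ)⁻¹ • ∑ g ∈ F k, Ξ g (Ξ g₀ y))
          - σ k (((F k).card : ℂ)⁻¹ • ∑ g ∈ F k, Ξ g y)) l (nhds 0) := by
      refine squeeze_zero_norm ?_ (hb0.mono_left hl)
      intro k
      exact hbound k
    have h8 := tendsto_nhds_unique ((hω' (Ξ g₀ y)).sub (hω' y)) hzero
    exact sub_eq_zero.mp h8
end

section
/- Let G be a countable discrete amenable group with right Følner sequence (F_k), acting by *-automorphisms Θ on a unital C*-algebra A such that there exists at least one Θ-invariant state. Let a ∈ A be positive. Then the sequence k ↦ ‖(1/|F_k|) ∑_{g∈F_k} Θ_g a‖ converges, and its limit equals m(a) := sup { ψ(a) : ψ a Θ-invariant state on A }. -/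
open Filter Pointwise Topology

section ErgAux

variable {A : Type*} [CStarAlgebra A]

lemma isState_map_zero {φ : A → ℂ} (hφ : IsState φ) : φ 0 = 0 := by
  have h := hφ.1 0 0
  rw [add_zero] at h
  exact (left_eq_add.mp h)

lemma isState_map_sum {φ : A → ℂ} (hφ : IsState φ) {ι : Type*} (s : Finset ι) (f : ι → A) :
    φ (∑ i ∈ s, f i) = ∑ i ∈ s, φ (f i) := by
  classical
  induction s using Finset.induction_on with
  | empty => simpa using isState_map_zero hφ
  | insert _ _ h ih => rw [Finset.sum_insert h, Finset.sum_insert h, hφ.1, ih]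

lemma isState_nonneg {φ : A → ℂ} (hφ : IsState φ) {x : A}
    (hx : x ∈ AddSubmonoid.closure (Set.range fun s : A => star s * s)) :
    0 ≤ (φ x).re ∧ (φ x).im = 0 := by
  induction hx using AddSubmonoid.closure_induction with
  | mem y hy => obtain ⟨s, rfl⟩ := hy; exact hφ.2.2.2 s
  | zero => simp [isState_map_zero hφ]
  | add y z _ _ hy hz =>
      rw [hφ.1]
      constructor
      · simp only [Complex.add_re]; linarith [hy.1, hz.1]
      · simp [hy.2, hz.2]

variable [PartialOrder A] [StarOrderedRing A]

lemma isState_mono {φ : A → ℂ} (hφ : IsState φ) {x y : A} (h : x ≤ y) :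
    (φ x).re ≤ (φ y).re ∧ (φ x).im = (φ y).im := by
  obtain ⟨p, hp, rfl⟩ := (StarOrderedRing.le_iff x y).mp h
  have hpos := isState_nonneg hφ hp
  rw [hφ.1]
  constructor
  · simp only [Complex.add_re]; linarith [hpos.1]
  · simp [hpos.2]

lemma isState_algebraMap {φ : A → ℂ} (hφ : IsState φ) (r : ℝ) :
    φ (algebraMap ℝ A r) = (r : ℂ) := by
  have h : algebraMap ℝ A r = (r : ℂ) • (1 : A) := by
    rw [Algebra.algebraMap_eq_smul_one]
    exact (algebraMap_smul ℂ r (1 : A)).symm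
  rw [h, hφ.2.1, hφ.2.2.1, mul_one]

lemma isState_re_le_norm {φ : A → ℂ} (hφ : IsState φ) {b : A} (hb : 0 ≤ b) :
    (φ b).re ≤ ‖b‖ := by
  have h1 : b ≤ algebraMap ℝ A ‖b‖ :=
    IsSelfAdjoint.le_algebraMap_norm_self (IsSelfAdjoint.of_nonneg hb)
  have h2 := (isState_mono hφ h1).1
  rwa [isState_algebraMap hφ, Complex.ofReal_re] at h2

variable [Nontrivial A]

lemma clm_im_eq_zero_of_selfAdjoint (f : A →L[ℂ] ℂ) (hf1 : f 1 = 1) (hfn : ‖f‖ ≤ 1)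
    {x : A} (hx : IsSelfAdjoint x) : (f x).im = 0 := by
  by_contra ht
  set t := (f x).im with htdef
  have key : ∀ r : ℝ, t ^ 2 + 2 * t * r ≤ ‖x‖ ^ 2 := by
    intro r
    set c : ℂ := Complex.I * r with hc
    set y : A := x + c • 1 with hy
    have hcc : c + star c = 0 := by
      simp [hc, Complex.ext_iff, Complex.star_def]
    have hc2 : star c * c = (r : ℂ) ^ 2 := by
      rw [hc, star_mul', Complex.star_def, Complex.conj_I, Complex.conj_ofReal]
      ring_nf
      rw [Complex.I_sq]
      ring
    have hsy : star y * y = x * x + ((r : ℂ) ^ 2) • 1 := by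
      have h1 : star y = x + star c • 1 := by
        rw [hy, star_add, hx.star_eq, star_smul, star_one]
      calc star y * y = (x + star c • 1) * (x + c • 1) := by rw [h1, hy]
        _ = x * x + ((c + star c) • x + (star c * c) • 1) := by
            simp only [mul_add, add_mul, mul_smul_comm, smul_mul_assoc, smul_smul,
              mul_one, one_mul, add_smul]
            module
        _ = x * x + ((r : ℂ) ^ 2) • 1 := by rw [hcc, hc2, zero_smul, zero_add]
    have hny : ‖y‖ ^ 2 ≤ ‖x‖ ^ 2 + r ^ 2 := by
      have h1 : ‖y‖ ^ 2 = ‖star y * y‖ := by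
        rw [CStarRing.norm_star_mul_self, sq]
      rw [h1, hsy]
      calc ‖x * x + ((r : ℂ) ^ 2) • (1 : A)‖ ≤ ‖x * x‖ + ‖((r : ℂ) ^ 2) • (1 : A)‖ :=
            norm_add_le _ _
        _ = ‖x * x‖ + r ^ 2 := by
            rw [norm_smul, norm_one, mul_one, ← Complex.ofReal_pow, Complex.norm_real,
              Real.norm_eq_abs, abs_of_nonneg (sq_nonneg r)]
        _ ≤ ‖x‖ ^ 2 + r ^ 2 := by
            have := norm_mul_le x x
            nlinarith
    have hfy : f y = f x + c := by
      rw [hy, map_add, map_smul, hf1, smul_eq_mul, mul_one]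
    have hineq : ‖f y‖ ^ 2 ≤ ‖x‖ ^ 2 + r ^ 2 := by
      have h1 : ‖f y‖ ≤ ‖y‖ := by
        calc ‖f y‖ ≤ ‖f‖ * ‖y‖ := f.le_opNorm y
          _ ≤ 1 * ‖y‖ := mul_le_mul_of_nonneg_right hfn (norm_nonneg y)
          _ = ‖y‖ := one_mul _
      nlinarith [norm_nonneg (f y), norm_nonneg y]
    have him : (f y).im = t + r := by rw [hfy, hc]; simp [htdef]
    have habs : (f y).im ^ 2 ≤ ‖f y‖ ^ 2 := by
      rw [Complex.sq_norm, Complex.normSq_apply]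
      nlinarith [sq_nonneg ((f y).re)]
    rw [him] at habs
    nlinarith
  have h := key ((‖x‖ ^ 2 + 1) / (2 * t))
  have h2t : 2 * t * ((‖x‖ ^ 2 + 1) / (2 * t)) = ‖x‖ ^ 2 + 1 := by
    field_simp
  rw [h2t] at h
  nlinarith [sq_nonneg t]

lemma isState_of_norm_le_one (f : A →L[ℂ] ℂ) (hf1 : f 1 = 1) (hfn : ‖f‖ ≤ 1) :
    IsState ⇑f := by
  refine ⟨fun x y => map_add f x y, fun c x => by rw [map_smul, smul_eq_mul], hf1, ?_⟩
  intro cc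
  set y : A := star cc * cc with hyd
  have hy : 0 ≤ y := star_mul_self_nonneg cc
  have hysa : IsSelfAdjoint y := IsSelfAdjoint.of_nonneg hy
  refine ⟨?_, clm_im_eq_zero_of_selfAdjoint f hf1 hfn hysa⟩
  set n : ℝ := ‖y‖ with hnd
  set z : A := y - algebraMap ℝ A (n / 2) with hzd
  have hzsa : IsSelfAdjoint z := by
    refine hysa.sub ?_
    exact IsSelfAdjoint.algebraMap A (by simp [IsSelfAdjoint])
  have hzub : z ≤ algebraMap ℝ A (n / 2) := by
    have h1 : y ≤ algebraMap ℝ A n := hysa.le_algebraMap_norm_self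
    have h2 : algebraMap ℝ A n - algebraMap ℝ A (n / 2) = algebraMap ℝ A (n / 2) := by
      rw [← map_sub]
      congr 1
      ring
    calc z = y - algebraMap ℝ A (n / 2) := hzd
      _ ≤ algebraMap ℝ A n - algebraMap ℝ A (n / 2) := sub_le_sub_right h1 _
      _ = algebraMap ℝ A (n / 2) := h2
  have hzlb : algebraMap ℝ A (-(n / 2)) ≤ z := by
    have h0 : algebraMap ℝ A (-(n / 2)) = 0 - algebraMap ℝ A (n / 2) := by
      rw [map_neg, zero_sub]
    rw [h0, hzd]
    exact sub_le_sub_right hy _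
  have hznorm : ‖z‖ ≤ n / 2 := by
    have hs1 : ∀ μ ∈ spectrum ℝ z, μ ≤ n / 2 :=
      (le_algebraMap_iff_spectrum_le (a := z) hzsa).mp hzub
    have hs2 : ∀ μ ∈ spectrum ℝ z, -(n / 2) ≤ μ :=
      (algebraMap_le_iff_le_spectrum (a := z) hzsa).mp hzlb
    rcases CStarAlgebra.norm_or_neg_norm_mem_spectrum (a := z) hzsa with h | h
    · exact hs1 _ h
    · have := hs2 _ h; linarith
  have hfy : f y = f z + ((n / 2 : ℝ) : ℂ) := by
    have hyz : y = z + algebraMap ℝ A (n / 2) := by rw [hzd, sub_add_cancel]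
    rw [hyz, map_add]
    congr 1
    have h3 : algebraMap ℝ A (n / 2) = ((n / 2 : ℝ) : ℂ) • (1 : A) := by
      rw [Algebra.algebraMap_eq_smul_one]
      exact (algebraMap_smul ℂ (n / 2 : ℝ) (1 : A)).symm
    rw [h3, map_smul, hf1, smul_eq_mul, mul_one]
  have hfz : ‖f z‖ ≤ n / 2 := by
    calc ‖f z‖ ≤ ‖f‖ * ‖z‖ := f.le_opNorm z
      _ ≤ 1 * (n / 2) := mul_le_mul hfn hznorm (norm_nonneg z) zero_le_one
      _ = n / 2 := one_mul _
  have hrez : -(n / 2) ≤ (f z).re := by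
    have h1 : |(f z).re| ≤ ‖f z‖ := Complex.abs_re_le_norm (f z)
    have h2 := abs_le.mp (h1.trans hfz)
    linarith [h2.1]
  rw [hfy]
  simp only [Complex.add_re, Complex.ofReal_re]
  linarith

lemma exists_norming_state {b : A} (hb : 0 ≤ b) :
    ∃ f : A →L[ℂ] ℂ, ‖f‖ ≤ 1 ∧ IsState ⇑f ∧ f b = (‖b‖ : ℂ) := by
  by_cases hb0 : b = 0
  · obtain ⟨f, hf1, hfx⟩ := exists_dual_vector ℂ (1 : A) (by simp)
    rw [norm_one] at hfx
    have hf1' : f 1 = 1 := by simpa using hfx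
    exact ⟨f, hf1.le, isState_of_norm_le_one f hf1' hf1.le, by simp [hb0]⟩
  · set n : ℝ := ‖b‖ with hnd
    have hn0 : 0 < n := norm_pos_iff.mpr hb0
    set c : A := b + algebraMap ℝ A n with hcd
    have hcs : (2 * n) ∈ spectrum ℝ c := by
      have h1 : n ∈ spectrum ℝ b := CStarAlgebra.norm_mem_spectrum_of_nonneg hb
      have h2 := spectrum.singleton_add_eq (R := ℝ) b n
      have h3 : n + n ∈ (({n} : Set ℝ) + spectrum ℝ b : Set ℝ) := Set.add_mem_add rfl h1
      rw [h2] at h3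
      have h4 : (2 : ℝ) * n = n + n := by ring
      rw [h4, hcd, add_comm b]
      exact h3
    have hcn : ‖c‖ = 2 * n := by
      refine le_antisymm ?_ ?_
      · calc ‖c‖ ≤ ‖b‖ + ‖algebraMap ℝ A n‖ := norm_add_le _ _
          _ = n + n := by
              rw [← hnd]
              congr 1
              rw [Algebra.algebraMap_eq_smul_one, norm_smul, norm_one, mul_one,
                Real.norm_eq_abs, abs_of_nonneg hn0.le]
          _ = 2 * n := by ring
      · have h := spectrum.norm_le_norm_of_mem hcs
        rwa [Real.norm_of_nonneg (by positivity)] at h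
    have hc0 : c ≠ 0 := by
      intro h
      rw [h, norm_zero] at hcn
      linarith
    obtain ⟨f, hf1, hfc⟩ := exists_dual_vector ℂ c (norm_ne_zero_iff.mpr hc0)
    have halg : f (algebraMap ℝ A n) = (n : ℂ) * f 1 := by
      have h3 : algebraMap ℝ A n = ((n : ℝ) : ℂ) • (1 : A) := by
        rw [Algebra.algebraMap_eq_smul_one]
        exact (algebraMap_smul ℂ (n : ℝ) (1 : A)).symm
      rw [h3, map_smul, smul_eq_mul]
    have hsum : f b + (n : ℂ) * f 1 = ((2 * n : ℝ) : ℂ) := by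
      rw [← halg, ← map_add, ← hcd, hfc, hcn]
      norm_num
    have hfb_norm : ‖f b‖ ≤ n := by
      calc ‖f b‖ ≤ ‖f‖ * ‖b‖ := f.le_opNorm b
        _ = n := by rw [hf1, one_mul]
    have hf1_norm : ‖f 1‖ ≤ 1 := by
      calc ‖f 1‖ ≤ ‖f‖ * ‖(1 : A)‖ := f.le_opNorm 1
        _ = 1 := by rw [hf1, norm_one, one_mul]
    have hre : (f b).re + n * (f 1).re = 2 * n := by
      have h := congrArg Complex.re hsum
      simpa [Complex.add_re, Complex.mul_re] using h
    have hbre : (f b).re ≤ n := le_trans (Complex.re_le_norm _) hfb_norm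
    have h1re : (f 1).re ≤ 1 := le_trans (Complex.re_le_norm _) hf1_norm
    have e1 : (f 1).re = 1 := by nlinarith
    have e2 : (f b).re = n := by nlinarith
    have sq1 : (f 1).re ^ 2 + (f 1).im ^ 2 ≤ 1 := by
      have h := hf1_norm
      have h2 : ‖f 1‖ ^ 2 ≤ 1 := by
        nlinarith [norm_nonneg (f 1)]
      rwa [Complex.sq_norm, Complex.normSq_apply, ← sq, ← sq] at h2
    have i1 : (f 1).im = 0 := by nlinarith [sq_nonneg ((f 1).im)]
    have sqb : (f b).re ^ 2 + (f b).im ^ 2 ≤ n ^ 2 := by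
      have h := hfb_norm
      have h2 : ‖f b‖ ^ 2 ≤ n ^ 2 := by
        nlinarith [norm_nonneg (f b)]
      rwa [Complex.sq_norm, Complex.normSq_apply, ← sq, ← sq] at h2
    have ib : (f b).im = 0 := by nlinarith [sq_nonneg ((f b).im)]
    have hf1' : f 1 = 1 := by
      apply Complex.ext <;> simp [e1, i1]
    refine ⟨f, hf1.le, isState_of_norm_le_one f hf1' hf1.le, ?_⟩
    apply Complex.ext <;> simp [e2, ib]

end ErgAux

set_option maxHeartbeats 1000000 in
/-- Main theorem, faithful case: for an action of an amenable group (with right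
Følner sequence `F_k`) on a unital C*-algebra admitting an invariant state, the
norms of the Følner averages of a positive element `a` converge to the ergodic
maximum `m(a) = sup { ψ(a) : ψ an invariant state }`. -/
theorem norm_average_tendsto_ergodic_max
    {G : Type*} [Group G] [DecidableEq G] [Countable G] {A : Type*}
    [NormedRing A] [StarRing A] [CStarRing A] [NormedAlgebra ℂ A] [StarModule ℂ A]
    [CompleteSpace A]
    (F : ℕ → Finset G) (hne : ∀ k, (F k).Nonempty)
    (hFolner : ∀ g : G,
      Tendsto (fun k => ((symmDiff (F k) ((F k).image (· * g))).card : ℝ) / (F k).card)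
        atTop (nhds 0))
    (Θ : G → A ≃⋆ₐ[ℂ] A) (hΘ : ∀ g h : G, ∀ x : A, Θ (g * h) x = Θ g (Θ h x))
    (hstate : ∃ ψ : A → ℂ, IsState ψ ∧ ∀ (g : G) (x : A), ψ (Θ g x) = ψ x)
    (a : A) (ha : ∃ b : A, a = star b * b) :
    Tendsto (fun k => ‖((F k).card : ℂ)⁻¹ • ∑ g ∈ F k, Θ g a‖) atTop
      (nhds (sSup {x : ℝ | ∃ ψ : A → ℂ, IsState ψ ∧
        (∀ (g : G) (y : A), ψ (Θ g y) = ψ y) ∧ (ψ a).re = x})) := by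
  classical
  letI : CStarAlgebra A := {}
  letI : PartialOrder A := CStarAlgebra.spectralOrder A
  letI : StarOrderedRing A := CStarAlgebra.spectralOrderedRing A
  obtain ⟨ψ₀, hψ₀, hψ₀inv⟩ := hstate
  have hnt : Nontrivial A := by
    by_contra h
    rw [not_nontrivial_iff_subsingleton] at h
    have h10 : (1 : A) = 0 := Subsingleton.elim _ _
    have h1 := hψ₀.2.2.1
    rw [h10, isState_map_zero hψ₀] at h1
    exact one_ne_zero h1.symm
  have ha' : 0 ≤ a := by obtain ⟨b, rfl⟩ := ha; exact star_mul_self_nonneg b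
  set Avg : ℕ → A := fun k => ((F k).card : ℂ)⁻¹ • ∑ g ∈ F k, Θ g a with hAvgdef
  have hcardR : ∀ k, (0 : ℝ) < (F k).card := fun k => by exact_mod_cast (hne k).card_pos
  have hcardC : ∀ k, ((F k).card : ℂ) ≠ 0 := fun k => by
    exact_mod_cast Nat.cast_ne_zero.mpr (hne k).card_pos.ne'
  have hcinv : ∀ k, ((F k).card : ℂ)⁻¹ = ((((F k).card : ℝ)⁻¹ : ℝ) : ℂ) := fun k => by
    push_cast; ring
  -- positivity of the averages
  have hAvgpos : ∀ k, 0 ≤ Avg k := by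
    intro k
    obtain ⟨b, hb⟩ := ha
    set s : ℂ := ((Real.sqrt (((F k).card : ℝ)⁻¹) : ℝ) : ℂ) with hs
    have hss : star s * s = ((F k).card : ℂ)⁻¹ := by
      rw [hs, Complex.star_def, Complex.conj_ofReal, ← Complex.ofReal_mul,
        Real.mul_self_sqrt (by positivity), hcinv k]
    have hrw : Avg k = ∑ g ∈ F k, star (s • Θ g b) * (s • Θ g b) := by
      show ((F k).card : ℂ)⁻¹ • ∑ g ∈ F k, Θ g a = _
      rw [Finset.smul_sum]
      refine Finset.sum_congr rfl fun g _ => ?_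
      rw [star_smul, smul_mul_smul_comm, hss, hb, map_mul, map_star]
    rw [hrw]
    exact Finset.sum_nonneg fun g _ => star_mul_self_nonneg _
  -- the target set
  set S : Set ℝ := {x : ℝ | ∃ ψ : A → ℂ, IsState ψ ∧
      (∀ (g : G) (y : A), ψ (Θ g y) = ψ y) ∧ (ψ a).re = x} with hSdef
  have hSbdd : BddAbove S := by
    refine ⟨‖a‖, ?_⟩
    rintro x ⟨ψ, hψ, _, rfl⟩
    exact isState_re_le_norm hψ ha'
  -- invariant states evaluate averages at ψ a
  have hinv_eval : ∀ ψ : A → ℂ, IsState ψ → (∀ (g : G) (y : A), ψ (Θ g y) = ψ y) →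
      ∀ k, ψ (Avg k) = ψ a := by
    intro ψ hψ hinv k
    rw [hAvgdef]
    rw [hψ.2.1, isState_map_sum hψ]
    rw [Finset.sum_congr rfl fun g _ => hinv g a, Finset.sum_const, nsmul_eq_mul]
    rw [← mul_assoc, inv_mul_cancel₀ (hcardC k), one_mul]
  have hlow : ∀ k, sSup S ≤ ‖Avg k‖ := by
    intro k
    refine Real.sSup_le ?_ (norm_nonneg _)
    rintro x ⟨ψ, hψ, hinv, rfl⟩
    rw [← hinv_eval ψ hψ hinv k]
    exact isState_re_le_norm hψ (hAvgpos k)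
  -- norming states for each average
  have hφex : ∀ k, ∃ f : A →L[ℂ] ℂ, ‖f‖ ≤ 1 ∧ IsState ⇑f ∧ f (Avg k) = (‖Avg k‖ : ℂ) :=
    fun k => exists_norming_state (hAvgpos k)
  choose φ hφ1 hφS hφA using hφex
  -- the Θ's as continuous linear maps
  let T : G → A →L[ℂ] A := fun g =>
    LinearMap.mkContinuous
      { toFun := Θ g, map_add' := map_add (Θ g), map_smul' := map_smul (Θ g) } 1
      (fun v => by rw [one_mul]; exact le_of_eq (StarAlgEquiv.norm_map (Θ g) v))
  have hT : ∀ g (v : A), T g v = Θ g v := fun g v => rfl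
  have hTnorm : ∀ g, ‖T g‖ ≤ 1 := fun g => LinearMap.mkContinuous_norm_le _ zero_le_one _
  -- the averaged functionals
  let Λ : ℕ → StrongDual ℂ A := fun k =>
    ((F k).card : ℂ)⁻¹ • ∑ g ∈ F k, (φ k).comp (T g)
  have hΛeval : ∀ k (x : A), Λ k x = ((F k).card : ℂ)⁻¹ * ∑ g ∈ F k, φ k (Θ g x) := by
    intro k x
    simp only [Λ, ContinuousLinearMap.smul_apply, ContinuousLinearMap.coe_sum',
      Finset.sum_apply, ContinuousLinearMap.coe_comp', Function.comp_apply, smul_eq_mul]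
    congr 1
  have hΛa : ∀ k, Λ k a = (‖Avg k‖ : ℂ) := by
    intro k
    rw [hΛeval, ← hφA k, hAvgdef]
    rw [map_smul, map_sum, smul_eq_mul]
  have hΛnorm : ∀ k, ‖Λ k‖ ≤ 1 := by
    intro k
    have h1 : ‖Λ k‖ ≤ ‖(((F k).card : ℂ))⁻¹‖ * ‖∑ g ∈ F k, (φ k).comp (T g)‖ :=
      (norm_smul _ _).le
    have h2 : ‖∑ g ∈ F k, (φ k).comp (T g)‖ ≤ ((F k).card : ℝ) := by
      calc ‖∑ g ∈ F k, (φ k).comp (T g)‖ ≤ ∑ g ∈ F k, ‖(φ k).comp (T g)‖ :=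
            norm_sum_le _ _
        _ ≤ ∑ g ∈ F k, 1 := by
            refine Finset.sum_le_sum fun g _ => ?_
            calc ‖(φ k).comp (T g)‖ ≤ ‖φ k‖ * ‖T g‖ := ContinuousLinearMap.opNorm_comp_le _ _
              _ ≤ 1 * 1 := mul_le_mul (hφ1 k) (hTnorm g) (norm_nonneg _) zero_le_one
              _ = 1 := one_mul 1
        _ = ((F k).card : ℝ) := by rw [Finset.sum_const, nsmul_eq_mul, mul_one]
    have h3 : ‖(((F k).card : ℂ))⁻¹‖ = ((F k).card : ℝ)⁻¹ := by
      rw [norm_inv, Complex.norm_natCast]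
    calc ‖Λ k‖ ≤ ‖(((F k).card : ℂ))⁻¹‖ * ‖∑ g ∈ F k, (φ k).comp (T g)‖ := h1
      _ ≤ ((F k).card : ℝ)⁻¹ * ((F k).card : ℝ) := by
          rw [h3]
          exact mul_le_mul_of_nonneg_left h2 (by positivity)
      _ = 1 := inv_mul_cancel₀ (hcardR k).ne'
  -- move to the weak dual
  let ψseq : ℕ → WeakDual ℂ A := fun k => StrongDual.toWeakDual (Λ k)
  have hψseq_eval : ∀ k (x : A), ψseq k x = Λ k x := fun k x => rfl
  -- ultrafilter argument
  rw [tendsto_iff_ultrafilter]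
  intro U hU
  have hK := WeakDual.isCompact_closedBall (0 : StrongDual ℂ A) 1
  have hmemK : ∀ k, ψseq k ∈
      (⇑WeakDual.toStrongDual ⁻¹' Metric.closedBall (0 : StrongDual ℂ A) 1) := by
    intro k
    simp only [Set.mem_preimage, Metric.mem_closedBall, dist_zero_right]
    exact hΛnorm k
  obtain ⟨ψI, hψImem, hψIle⟩ := hK.ultrafilter_le_nhds (U.map ψseq) (by
    rw [Ultrafilter.coe_map]
    exact le_principal_iff.mpr (mem_map.mpr (univ_mem' hmemK)))
  rw [Ultrafilter.coe_map] at hψIle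
  have hten : Tendsto ψseq ↑U (𝓝 ψI) := hψIle
  have heval : ∀ y : A, Tendsto (fun k => ψseq k y) ↑U (𝓝 (ψI y)) :=
    fun y => ((WeakDual.eval_continuous y).tendsto ψI).comp hten
  -- ψI is a state
  have hψI_one : ψI 1 = 1 := by
    have h1 : ∀ k, ψseq k (1 : A) = 1 := by
      intro k
      rw [hψseq_eval, hΛeval]
      rw [Finset.sum_congr rfl fun g _ => by rw [map_one (Θ g), (hφS k).2.2.1]]
      rw [Finset.sum_const, nsmul_eq_mul, mul_one, inv_mul_cancel₀ (hcardC k)]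
    have h2 : Tendsto (fun k => ψseq k (1 : A)) ↑U (𝓝 1) := by
      rw [show (fun k => ψseq k (1 : A)) = fun _ => (1 : ℂ) from funext h1]
      exact tendsto_const_nhds
    exact tendsto_nhds_unique (heval 1) h2
  have hψI_pos : ∀ y : A, 0 ≤ (ψI (star y * y)).re ∧ (ψI (star y * y)).im = 0 := by
    intro y
    have hC : IsClosed {z : ℂ | 0 ≤ z.re ∧ z.im = 0} :=
      (isClosed_le continuous_const Complex.continuous_re).inter
        (isClosed_eq Complex.continuous_im continuous_const)
    refine hC.mem_of_tendsto (heval (star y * y)) (Eventually.of_forall fun k => ?_)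
    rw [Set.mem_setOf_eq, hψseq_eval, hΛeval]
    rw [Finset.sum_congr rfl fun g (_ : g ∈ F k) =>
      (by rw [map_mul, map_star] : φ k (Θ g (star y * y)) = φ k (star (Θ g y) * Θ g y))]
    rw [hcinv k]
    constructor
    · rw [Complex.re_ofReal_mul]
      refine mul_nonneg (by positivity) ?_
      rw [Complex.re_sum]
      exact Finset.sum_nonneg fun g _ => ((hφS k).2.2.2 (Θ g y)).1
    · rw [Complex.im_ofReal_mul, Complex.im_sum]
      rw [Finset.sum_eq_zero fun g _ => ((hφS k).2.2.2 (Θ g y)).2, mul_zero]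
  have hψI_inv : ∀ (g : G) (y : A), ψI (Θ g y) = ψI y := by
    intro h y
    have hbound : ∀ k, ‖ψseq k (Θ h y) - ψseq k y‖ ≤
        (((symmDiff (F k) ((F k).image (· * h))).card : ℝ) / (F k).card) * ‖y‖ := by
      intro k
      set u : G → ℂ := fun g => φ k (Θ g y) with hu
      have hunorm : ∀ g, ‖u g‖ ≤ ‖y‖ := by
        intro g
        calc ‖u g‖ ≤ ‖φ k‖ * ‖Θ g y‖ := (φ k).le_opNorm _
          _ ≤ 1 * ‖y‖ := by
              rw [StarAlgEquiv.norm_map]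
              exact mul_le_mul_of_nonneg_right (hφ1 k) (norm_nonneg y)
          _ = ‖y‖ := one_mul _
      have h1 : ψseq k (Θ h y) =
          ((F k).card : ℂ)⁻¹ * ∑ g ∈ (F k).image (· * h), u g := by
        rw [hψseq_eval, hΛeval]
        congr 1
        rw [Finset.sum_image (fun g1 _ g2 _ e => mul_right_cancel e)]
        exact Finset.sum_congr rfl fun g _ => by rw [hu]; rw [← hΘ g h y]
      have h2 : ψseq k y = ((F k).card : ℂ)⁻¹ * ∑ g ∈ F k, u g := by
        rw [hψseq_eval, hΛeval]
      rw [h1, h2, ← mul_sub, norm_mul, norm_inv, Complex.norm_natCast]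
      have h3 : ∑ g ∈ (F k).image (· * h), u g - ∑ g ∈ F k, u g =
          ∑ g ∈ (F k).image (· * h) \ F k, u g - ∑ g ∈ F k \ (F k).image (· * h), u g :=
        (Finset.sum_sdiff_sub_sum_sdiff).symm
      have h4 : ‖∑ g ∈ (F k).image (· * h), u g - ∑ g ∈ F k, u g‖ ≤
          ((symmDiff (F k) ((F k).image (· * h))).card : ℝ) * ‖y‖ := by
        rw [h3]
        have hd1 : ‖∑ g ∈ (F k).image (· * h) \ F k, u g‖ ≤
            (((F k).image (· * h) \ F k).card : ℝ) * ‖y‖ := by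
          refine (norm_sum_le _ _).trans ?_
          calc ∑ g ∈ (F k).image (· * h) \ F k, ‖u g‖ ≤
              ∑ _g ∈ (F k).image (· * h) \ F k, ‖y‖ :=
                Finset.sum_le_sum fun g _ => hunorm g
            _ = (((F k).image (· * h) \ F k).card : ℝ) * ‖y‖ := by
                rw [Finset.sum_const, nsmul_eq_mul]
        have hd2 : ‖∑ g ∈ F k \ (F k).image (· * h), u g‖ ≤
            ((F k \ (F k).image (· * h)).card : ℝ) * ‖y‖ := by
          refine (norm_sum_le _ _).trans ?_
          calc ∑ g ∈ F k \ (F k).image (· * h), ‖u g‖ ≤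
              ∑ _g ∈ F k \ (F k).image (· * h), ‖y‖ :=
                Finset.sum_le_sum fun g _ => hunorm g
            _ = ((F k \ (F k).image (· * h)).card : ℝ) * ‖y‖ := by
                rw [Finset.sum_const, nsmul_eq_mul]
        have hcard : ((symmDiff (F k) ((F k).image (· * h))).card : ℝ) =
            ((F k \ (F k).image (· * h)).card : ℝ) +
            (((F k).image (· * h) \ F k).card : ℝ) := by
          have hsd : symmDiff (F k) ((F k).image (· * h)) =
              (F k \ (F k).image (· * h)) ∪ ((F k).image (· * h) \ F k) := rfl
          rw [hsd, Finset.card_union_of_disjoint (disjoint_sdiff_sdiff)]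
          push_cast
          ring
        calc ‖∑ g ∈ (F k).image (· * h) \ F k, u g - ∑ g ∈ F k \ (F k).image (· * h), u g‖ ≤
            ‖∑ g ∈ (F k).image (· * h) \ F k, u g‖ + ‖∑ g ∈ F k \ (F k).image (· * h), u g‖ :=
              norm_sub_le _ _
          _ ≤ (((F k).image (· * h) \ F k).card : ℝ) * ‖y‖ +
              ((F k \ (F k).image (· * h)).card : ℝ) * ‖y‖ := add_le_add hd1 hd2
          _ = ((symmDiff (F k) ((F k).image (· * h))).card : ℝ) * ‖y‖ := by
              rw [hcard]; ring
      calc ((F k).card : ℝ)⁻¹ * ‖∑ g ∈ (F k).image (· * h), u g - ∑ g ∈ F k, u g‖ ≤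
          ((F k).card : ℝ)⁻¹ * (((symmDiff (F k) ((F k).image (· * h))).card : ℝ) * ‖y‖) :=
            mul_le_mul_of_nonneg_left h4 (inv_nonneg.mpr (Nat.cast_nonneg _))
        _ = (((symmDiff (F k) ((F k).image (· * h))).card : ℝ) / (F k).card) * ‖y‖ := by
            rw [div_eq_mul_inv]; ring
    have hzero : Tendsto (fun k => ψseq k (Θ h y) - ψseq k y) atTop (𝓝 0) :=
      squeeze_zero_norm hbound (by simpa using (hFolner h).mul_const ‖y‖)
    have hlim : Tendsto (fun k => ψseq k (Θ h y) - ψseq k y) ↑U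
        (𝓝 (ψI (Θ h y) - ψI y)) := (heval (Θ h y)).sub (heval y)
    have hz := tendsto_nhds_unique hlim (hzero.mono_left hU)
    exact sub_eq_zero.mp hz
  have hψI_state : IsState (⇑ψI : A → ℂ) :=
    ⟨fun x y => map_add ψI x y, fun c x => by rw [map_smul, smul_eq_mul], hψI_one, hψI_pos⟩
  -- conclude
  have hxa : ∀ k, ψseq k a = (‖Avg k‖ : ℂ) := fun k => by rw [hψseq_eval, hΛa]
  have hxtend : Tendsto (fun k => ‖Avg k‖) ↑U (𝓝 ((ψI a).re)) := by
    have h1 : Tendsto (fun k => (ψseq k a).re) ↑U (𝓝 ((ψI a).re)) :=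
      (Complex.continuous_re.tendsto _).comp (heval a)
    have h2 : (fun k => (ψseq k a).re) = fun k => ‖Avg k‖ := by
      funext k
      rw [hxa k, Complex.ofReal_re]
    rwa [h2] at h1
  have hLmem : (ψI a).re ∈ S := ⟨⇑ψI, hψI_state, hψI_inv, rfl⟩
  have hLle : (ψI a).re ≤ sSup S := le_csSup hSbdd hLmem
  have hmle : sSup S ≤ (ψI a).re := ge_of_tendsto hxtend (Eventually.of_forall fun k => hlow k)
  have hfin : (ψI a).re = sSup S := le_antisymm hLle hmle
  rw [← hfin]
  exact hxtend
end
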